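/- Let ν be a compactly supported Borel measure on [0,1], let γ = (α, β) ∈ [0, π/2)², and define for g ∈ L²(ν) the function f(x) = b·tan(α) + b·x + ∫_{[0,x]} (x − y) g(y) dν(y), where b = −(1 + tan α + tan β)^{-1} · ( tan(β) ∫ g dν + ∫ (1 − y) g(y) dν(y) ). Then f is continuous, f''_{ν} = g in the Kreĭn–Feller sense (i.e., f(x) = f(0) + f'(0)x + ∫_{[0,x]}(x−y)g(y)dν(y) with f(0) = b tan α, f'(0) = b), and f satisfies the Robin boundary conditions f(0)cos α − f'(0) sin α = 0 and f(1) cos β + f'(1) sin β = 0, where f'(1) = f'(0) + ∫_{[0,1]} g dν. -/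

import Mathlib

open MeasureTheory Set Filter

/-- Distribution function of a measure on `[0,1]`. -/
noncomputable def Fdist (μ : Measure ℝ) (x : ℝ) : ℝ := (μ (Set.Icc 0 x)).toReal

/-- Pseudo-inverse of the distribution function. -/
noncomputable def Finv (μ : Measure ℝ) (x : ℝ) : ℝ :=
  sInf {y ∈ Set.Icc (0:ℝ) 1 | x ≤ Fdist μ y}

/-- Topological support of a measure. -/
def msupport (μ : Measure ℝ) : Set ℝ := {x | ∀ U : Set ℝ, IsOpen U → x ∈ U → 0 < μ U}

theorem stmt_7 (ν : Measure ℝ) [IsProbabilityMeasure ν]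
    (hνc : ν (Set.Icc (0:ℝ) 1)ᶜ = 0) (hν0 : ν {(0:ℝ)} = 0) (hν1 : ν {(1:ℝ)} = 0)
    (α β : ℝ) (hα : α ∈ Set.Ico 0 (Real.pi/2)) (hβ : β ∈ Set.Ico 0 (Real.pi/2))
    (g : ℝ → ℝ) (hg : MemLp g 2 ν)
    (b : ℝ)
    (hb : b = -(1 + Real.tan α + Real.tan β)⁻¹ *
        (Real.tan β * ∫ y, g y ∂ν + ∫ y, (1 - y) * g y ∂ν))
    (f : ℝ → ℝ)
    (hf : ∀ x : ℝ, f x = b * Real.tan α + b * x + ∫ y in Set.Icc 0 x, (x - y) * g y ∂ν) :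
    ContinuousOn f (Set.Icc 0 1) ∧
    f 0 = b * Real.tan α ∧
    (∀ x ∈ Set.Icc (0:ℝ) 1,
      f x = f 0 + b * x + ∫ y in Set.Icc 0 x, (x - y) * g y ∂ν) ∧
    f 0 * Real.cos α - b * Real.sin α = 0 ∧
    f 1 * Real.cos β + (b + ∫ y, g y ∂ν) * Real.sin β = 0 := by
  have hpi := Real.pi_pos
  have hcosα : 0 < Real.cos α :=
    Real.cos_pos_of_mem_Ioo ⟨by linarith [hα.1], hα.2⟩
  have hcosβ : 0 < Real.cos β :=
    Real.cos_pos_of_mem_Ioo ⟨by linarith [hβ.1], hβ.2⟩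
  have htα : 0 ≤ Real.tan α :=
    Real.tan_nonneg_of_nonneg_of_le_pi_div_two hα.1 hα.2.le
  have htβ : 0 ≤ Real.tan β :=
    Real.tan_nonneg_of_nonneg_of_le_pi_div_two hβ.1 hβ.2.le
  have hgi : Integrable g ν := hg.integrable one_le_two
  have hae : ∀ᵐ y ∂ν, y ∈ Set.Icc (0:ℝ) 1 := by
    rw [MeasureTheory.ae_iff]
    exact hνc
  -- integrability of truncated integrands
  have hint : ∀ x : ℝ, Integrable (fun y => max (x - y) 0 * g y) ν := by
    intro x
    apply Integrable.mono' (hgi.norm.const_mul (|x| + 1))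
    · exact (((continuous_const.sub continuous_id).max continuous_const).aestronglyMeasurable).mul
        hg.aestronglyMeasurable
    · filter_upwards [hae] with y hy
      have h1 : |max (x - y) 0| ≤ |x| + 1 := by
        rw [abs_of_nonneg (le_max_right _ _)]
        rcases le_or_gt (x - y) 0 with h | h
        · rw [max_eq_right h]; positivity
        · rw [max_eq_left h.le]
          have := le_abs_self x
          linarith [hy.1]
      calc ‖max (x - y) 0 * g y‖ = |max (x - y) 0| * ‖g y‖ := by
            rw [norm_mul, Real.norm_eq_abs]
        _ ≤ (|x| + 1) * ‖g y‖ := by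
            apply mul_le_mul_of_nonneg_right h1 (norm_nonneg _)
  have hint1 : Integrable (fun y => (1 - y) * g y) ν := by
    apply Integrable.mono' hgi.norm
    · exact ((continuous_const.sub continuous_id).aestronglyMeasurable).mul
        hg.aestronglyMeasurable
    · filter_upwards [hae] with y hy
      rw [norm_mul]
      have : ‖(1:ℝ) - y‖ ≤ 1 := by
        rw [Real.norm_eq_abs, abs_of_nonneg (by linarith [hy.2])]; linarith [hy.1]
      nlinarith [norm_nonneg (g y)]
  -- set integrals agree with truncated full integrals
  have hset : ∀ x : ℝ, (∫ y in Set.Icc 0 x, (x - y) * g y ∂ν)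
      = ∫ y, max (x - y) 0 * g y ∂ν := by
    intro x
    rw [← MeasureTheory.integral_indicator measurableSet_Icc]
    apply integral_congr_ae
    filter_upwards [hae] with y hy
    rcases le_or_gt y x with h | h
    · rw [Set.indicator_of_mem (Set.mem_Icc.mpr ⟨hy.1, h⟩), max_eq_left (by linarith)]
    · rw [Set.indicator_of_notMem
        (fun hmem => absurd (Set.mem_Icc.mp hmem).2 (not_le.mpr h)),
        max_eq_right (by linarith)]
      ring
  -- f 0
  have hf0 : f 0 = b * Real.tan α := by
    rw [hf 0, Set.Icc_self]
    rw [Measure.restrict_eq_zero.mpr hν0, integral_zero_measure]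
    ring
  -- continuity of the truncated integral
  set C : ℝ := ∫ y, ‖g y‖ ∂ν with hC
  have hC0 : 0 ≤ C := integral_nonneg fun y => norm_nonneg _
  have hlip : LipschitzWith C.toNNReal (fun x => ∫ y, max (x - y) 0 * g y ∂ν) := by
    apply LipschitzWith.of_dist_le_mul
    intro x x'
    rw [Real.dist_eq, Real.dist_eq, Real.coe_toNNReal _ hC0]
    have key : (∫ y, max (x - y) 0 * g y ∂ν) - ∫ y, max (x' - y) 0 * g y ∂ν
        = ∫ y, (max (x - y) 0 - max (x' - y) 0) * g y ∂ν := by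
      rw [← integral_sub (hint x) (hint x')]
      congr 1; funext y; ring
    rw [key]
    calc |∫ y, (max (x - y) 0 - max (x' - y) 0) * g y ∂ν|
        ≤ ∫ y, ‖(max (x - y) 0 - max (x' - y) 0) * g y‖ ∂ν := by
          rw [← Real.norm_eq_abs]
          exact norm_integral_le_integral_norm _
      _ ≤ ∫ y, |x - x'| * ‖g y‖ ∂ν := by
          apply integral_mono_of_nonneg (Eventually.of_forall fun y => norm_nonneg _)
            (hgi.norm.const_mul _)
          apply Eventually.of_forall
          intro y
          dsimp only
          rw [norm_mul, Real.norm_eq_abs]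
          apply mul_le_mul_of_nonneg_right _ (norm_nonneg _)
          have := abs_max_sub_max_le_abs (x - y) (x' - y) 0
          simpa [show x - y - (x' - y) = x - x' by ring] using this
      _ = C * |x - x'| := by rw [integral_const_mul]; ring
  have hcont : ContinuousOn f (Set.Icc 0 1) := by
    have : Continuous fun x => b * Real.tan α + b * x + ∫ y, max (x - y) 0 * g y ∂ν :=
      (continuous_const.add (continuous_const.mul continuous_id)).add hlip.continuous
    apply this.continuousOn.congr
    intro x _
    rw [hf x, hset x]
  refine ⟨hcont, hf0, ?_, ?_, ?_⟩
  · intro x _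
    rw [hf x, hf0]
  · rw [hf0, Real.tan_eq_sin_div_cos]
    field_simp
    ring
  · -- boundary condition at 1
    have hIcc : MeasurableSet (Set.Icc (0:ℝ) 1) := measurableSet_Icc
    have hfull : (∫ y in Set.Icc 0 1, (1 - y) * g y ∂ν) = ∫ y, (1 - y) * g y ∂ν := by
      rw [← integral_add_compl hIcc hint1, Measure.restrict_eq_zero.mpr hνc,
        integral_zero_measure, add_zero]
    have hf1 : f 1 = b * Real.tan α + b + ∫ y, (1 - y) * g y ∂ν := by
      rw [hf 1, hfull]; ring
    set I : ℝ := ∫ y, g y ∂ν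
    set J : ℝ := ∫ y, (1 - y) * g y ∂ν
    have hsinβ : Real.sin β = Real.tan β * Real.cos β := by
      rw [Real.tan_eq_sin_div_cos]
      field_simp
    have hne : (1 : ℝ) + Real.tan α + Real.tan β ≠ 0 := by
      have : (0:ℝ) < 1 + Real.tan α + Real.tan β := by linarith
      exact this.ne'
    have hbsum : b * (1 + Real.tan α + Real.tan β) = -(Real.tan β * I + J) := by
      rw [hb]
      field_simp
    rw [hf1, hsinβ]
    have hzero : (b * Real.tan α + b + J) + (b + I) * Real.tan β = 0 := by
      linear_combination hbsum
    linear_combination Real.cos β * hzero
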